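/- There exists a universal constant δ > 0 such that the following holds for all sufficiently large n: if 𝒢 is any finite collection of graphs on [n] = {1,…,n} with the property that every triangle-free graph on [n] is a subgraph of some member of 𝒢, then Σ_{G∈𝒢} exp(−δ·(C(n,2) − e(G))/√n) ≥ 1/2, where C(n,2) = n(n−1)/2 is the number of edges of the complete graph on [n]. -/

import Mathlib

open Finset

namespace S1

variable {n : ℕ}

/-- triangle-freeness of a finite set of pairs -/
def TF (A : Finset (Sym2 (Fin n))) : Prop :=
  ∀ u v w : Fin n, s(u,v) ∈ A → s(u,w) ∈ A → s(v,w) ∈ A → False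

instance (A : Finset (Sym2 (Fin n))) : Decidable (TF A) := by
  unfold TF; infer_instance

lemma TF.sub {A B : Finset (Sym2 (Fin n))} (h : B ⊆ A) (hA : TF A) : TF B :=
  fun u v w h1 h2 h3 => hA u v w (h h1) (h h2) (h h3)

lemma TF_empty : TF (∅ : Finset (Sym2 (Fin n))) := by
  intro u v w h _ _; simp at h

/-- weighted count of triangle-free subsets of H -/
noncomputable def f (p : ℝ) (H : Finset (Sym2 (Fin n))) : ℝ :=
  ∑ A ∈ H.powerset, if TF A then p ^ A.card * (1-p) ^ (H.card - A.card) else 0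

lemma wt_nonneg {p : ℝ} (hp0 : 0 ≤ p) (hp : p ≤ 1/2) (a b : ℕ) :
    0 ≤ p ^ a * (1-p) ^ b := by
  have : (0:ℝ) ≤ 1 - p := by linarith
  positivity

lemma term_nonneg {p : ℝ} (hp0 : 0 ≤ p) (hp : p ≤ 1/2) (P : Prop) [Decidable P] (a b : ℕ) :
    0 ≤ (if P then p ^ a * (1-p) ^ b else 0) := by
  split
  · exact wt_nonneg hp0 hp a b
  · exact le_refl 0

lemma f_nonneg {p : ℝ} (hp0 : 0 ≤ p) (hp : p ≤ 1/2) (H : Finset (Sym2 (Fin n))) :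
    0 ≤ f p H :=
  Finset.sum_nonneg fun A _ => term_nonneg hp0 hp _ _ _

lemma f_pos {p : ℝ} (hp0 : 0 ≤ p) (hp : p ≤ 1/2) (H : Finset (Sym2 (Fin n))) :
    0 < f p H := by
  have hq : (0:ℝ) < 1 - p := by linarith
  have hmem : ∅ ∈ H.powerset := Finset.empty_mem_powerset H
  have h0 : (0:ℝ) < (if TF (∅ : Finset (Sym2 (Fin n))) then
      p ^ (∅ : Finset (Sym2 (Fin n))).card * (1-p) ^ (H.card - (∅ : Finset (Sym2 (Fin n))).card) else 0) := by
    rw [if_pos TF_empty]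
    simp only [Finset.card_empty, pow_zero, one_mul, Nat.sub_zero]
    positivity
  refine h0.trans_le ?_
  exact Finset.single_le_sum (f := fun A => if TF A then p ^ A.card * (1-p) ^ (H.card - A.card) else 0)
    (fun A _ => term_nonneg hp0 hp _ _ _) hmem

lemma helper {B : Finset (Sym2 (Fin n))} {u v z : Fin n}
    (hB : ∀ x ∈ B, ¬ x.IsDiag) (huv : u ≠ v)
    (h1 : s(u,z) ∈ insert s(u,v) B) (h2 : s(v,z) ∈ insert s(u,v) B) :
    ∃ w, s(u,w) ∈ B ∧ s(v,w) ∈ B := by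
  rcases Finset.mem_insert.mp h1 with h | h1'
  · rw [Sym2.eq_iff] at h
    have hz : z = v := by tauto
    subst hz
    rcases Finset.mem_insert.mp h2 with h' | h2'
    · rw [Sym2.eq_iff] at h'
      rcases h' with ⟨h', -⟩ | ⟨-, h'⟩ <;> exact absurd h'.symm huv
    · exact absurd (Sym2.mk_isDiag_iff.mpr rfl) (hB _ h2')
  · rcases Finset.mem_insert.mp h2 with h | h2'
    · rw [Sym2.eq_iff] at h
      have hz : z = u := by tauto
      subst hz
      exact absurd (Sym2.mk_isDiag_iff.mpr rfl) (hB _ h1')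
    · exact ⟨z, h1', h2'⟩

lemma exists_path {B : Finset (Sym2 (Fin n))} {u v : Fin n}
    (hB : ∀ x ∈ B, ¬x.IsDiag) (huv : u ≠ v)
    (h1 : TF B) (h2 : ¬ TF (insert s(u,v) B)) :
    ∃ w, s(u,w) ∈ B ∧ s(v,w) ∈ B := by
  unfold TF at h2
  push_neg at h2
  obtain ⟨x, y, z, hxy, hxz, hyz, -⟩ := h2
  rcases Finset.mem_insert.mp hxy with h | hxy'
  · rw [Sym2.eq_iff] at h
    rcases h with ⟨rfl, rfl⟩ | ⟨rfl, rfl⟩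
    · exact helper hB huv hxz hyz
    · exact helper hB huv hyz hxz
  · rcases Finset.mem_insert.mp hxz with h | hxz'
    · rw [Sym2.eq_iff] at h
      rcases h with ⟨rfl, rfl⟩ | ⟨rfl, rfl⟩
      · rw [show (s(y,z) : Sym2 (Fin n)) = s(z,y) from Sym2.eq_swap] at hyz
        exact helper hB huv (Finset.mem_insert_of_mem hxy') hyz
      · rw [show (s(y,z) : Sym2 (Fin n)) = s(z,y) from Sym2.eq_swap] at hyz
        exact helper hB huv hyz (Finset.mem_insert_of_mem hxy')
    · rcases Finset.mem_insert.mp hyz with h | hyz'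
      · rw [Sym2.eq_iff] at h
        rcases h with ⟨rfl, rfl⟩ | ⟨rfl, rfl⟩
        · rw [Sym2.eq_swap] at hxy' hxz'
          exact ⟨x, hxy', hxz'⟩
        · rw [Sym2.eq_swap] at hxy' hxz'
          exact ⟨x, hxz', hxy'⟩
      · exact (h1 x y z hxy' hxz' hyz').elim

lemma pair_bound {p : ℝ} (hp0 : 0 ≤ p) (hp : p ≤ 1/2) (H : Finset (Sym2 (Fin n)))
    (a b : Sym2 (Fin n)) (hab : a ≠ b) :
    ∑ B ∈ H.powerset, (if TF B ∧ a ∈ B ∧ b ∈ B then p ^ B.card * (1-p) ^ (H.card - B.card) else 0)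
      ≤ 4 * p^2 * f p H := by
  have hq : (0:ℝ) < 1 - p := by linarith
  have hqne : (1:ℝ) - p ≠ 0 := ne_of_gt hq
  set D := H.powerset.filter (fun B => TF B ∧ a ∈ B ∧ b ∈ B) with hD
  have hLHS : ∑ B ∈ H.powerset,
      (if TF B ∧ a ∈ B ∧ b ∈ B then p ^ B.card * (1-p) ^ (H.card - B.card) else 0)
      = ∑ B ∈ D, p ^ B.card * (1-p) ^ (H.card - B.card) := by
    rw [hD, Finset.sum_filter]
  rw [hLHS]
  have key : ∑ B ∈ D, p ^ B.card * (1-p) ^ (H.card - B.card)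
      ≤ (p/(1-p))^2 * f p H := by
    have hterm : ∀ B ∈ D, p ^ B.card * (1-p) ^ (H.card - B.card)
        = (p/(1-p))^2 * (if TF ((B.erase a).erase b) then
            p ^ ((B.erase a).erase b).card * (1-p) ^ (H.card - ((B.erase a).erase b).card) else 0) := by
      intro B hB
      rw [hD, Finset.mem_filter, Finset.mem_powerset] at hB
      obtain ⟨hBH, hTF, ha, hb⟩ := hB
      have hba : b ∈ B.erase a := Finset.mem_erase.mpr ⟨Ne.symm hab, hb⟩
      have hTFC : TF ((B.erase a).erase b) :=
        hTF.sub (((B.erase a).erase_subset b).trans (B.erase_subset a))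
      rw [if_pos hTFC]
      have h2 : 2 ≤ B.card := Finset.one_lt_card.mpr ⟨a, ha, b, hb, hab⟩
      have hBH' : B.card ≤ H.card := Finset.card_le_card hBH
      have hc1 : (B.erase a).card = B.card - 1 := Finset.card_erase_of_mem ha
      have hc2 : ((B.erase a).erase b).card = B.card - 2 := by
        rw [Finset.card_erase_of_mem hba, hc1]
        omega
      have e1 : B.card = ((B.erase a).erase b).card + 2 := by omega
      have e2 : H.card - ((B.erase a).erase b).card = (H.card - B.card) + 2 := by omega
      rw [e2, e1, pow_add, pow_add, div_pow]
      field_simp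
    calc ∑ B ∈ D, p ^ B.card * (1-p) ^ (H.card - B.card)
        = ∑ B ∈ D, (p/(1-p))^2 * (if TF ((B.erase a).erase b) then
            p ^ ((B.erase a).erase b).card * (1-p) ^ (H.card - ((B.erase a).erase b).card) else 0) :=
          Finset.sum_congr rfl hterm
      _ = (p/(1-p))^2 * ∑ B ∈ D, (if TF ((B.erase a).erase b) then
            p ^ ((B.erase a).erase b).card * (1-p) ^ (H.card - ((B.erase a).erase b).card) else 0) := by
          rw [Finset.mul_sum]
      _ = (p/(1-p))^2 * ∑ C ∈ D.image (fun B => (B.erase a).erase b), (if TF C then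
            p ^ C.card * (1-p) ^ (H.card - C.card) else 0) := by
          rw [Finset.sum_image]
          intro B hB B' hB' hEq
          rw [hD, Finset.mem_coe, Finset.mem_filter] at hB hB'
          obtain ⟨-, -, haB, hbB⟩ := hB
          obtain ⟨-, -, haB', hbB'⟩ := hB'
          ext x
          by_cases hxa : x = a
          · subst hxa; simp [haB, haB']
          · by_cases hxb : x = b
            · subst hxb; simp [hbB, hbB']
            · have h1 : x ∈ B ↔ x ∈ (B.erase a).erase b := by
                simp [Finset.mem_erase, hxa, hxb]
              have h2 : x ∈ B' ↔ x ∈ (B'.erase a).erase b := by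
                simp [Finset.mem_erase, hxa, hxb]
              beta_reduce at hEq; rw [h1, h2, hEq]
      _ ≤ (p/(1-p))^2 * f p H := by
          apply mul_le_mul_of_nonneg_left _ (by positivity)
          rw [f]
          apply Finset.sum_le_sum_of_subset_of_nonneg
          · intro C hC
            rw [Finset.mem_image] at hC
            obtain ⟨B, hB, rfl⟩ := hC
            rw [hD, Finset.mem_filter, Finset.mem_powerset] at hB
            exact Finset.mem_powerset.mpr
              ((((B.erase a).erase_subset b).trans (B.erase_subset a)).trans hB.1)
          · intro C _ _; exact term_nonneg hp0 hp _ _ _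
  refine key.trans ?_
  apply mul_le_mul_of_nonneg_right _ (f_nonneg hp0 hp H)
  rw [div_pow]
  rw [div_le_iff₀ (by positivity)]
  have h4 : (1:ℝ)/4 ≤ (1-p)^2 := by nlinarith
  nlinarith [mul_le_mul_of_nonneg_left h4 (by positivity : (0:ℝ) ≤ 4*p^2)]

lemma removal {p : ℝ} (hp0 : 0 ≤ p) (hp : p ≤ 1/2) {H : Finset (Sym2 (Fin n))}
    (hH : ∀ x ∈ H, ¬x.IsDiag) :
    ∀ e ∈ H, (1 - 4 * (n:ℝ) * p^3) * f p (H.erase e) ≤ f p H := by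
  intro e
  induction e using Sym2.ind with
  | _ u v =>
  intro he
  have huv : u ≠ v := by
    have := hH _ he
    rwa [Sym2.mk_isDiag_iff] at this
  have hq : (0:ℝ) < 1 - p := by linarith
  set H' := H.erase s(u,v) with hH'def
  have hH'diag : ∀ x ∈ H', ¬x.IsDiag := fun x hx => hH x (Finset.erase_subset _ _ hx)
  have hnm : s(u,v) ∉ H' := Finset.notMem_erase _ _
  have hins : H = insert s(u,v) H' := (Finset.insert_erase he).symm
  -- decomposition
  have hdec : f p H = (1-p) * f p H' + p * ∑ B ∈ H'.powerset,
      (if TF (insert s(u,v) B) then p ^ B.card * (1-p) ^ (H'.card - B.card) else 0) := by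
    rw [f, hins, Finset.card_insert_of_notMem hnm, Finset.sum_powerset_insert hnm]
    congr 1
    · rw [f, Finset.mul_sum]
      apply Finset.sum_congr rfl
      intro B hB
      have hle : B.card ≤ H'.card := Finset.card_le_card (Finset.mem_powerset.mp hB)
      have he1 : H'.card + 1 - B.card = (H'.card - B.card) + 1 := by omega
      rw [he1, pow_succ]
      by_cases hTFB : TF B
      · rw [if_pos hTFB, if_pos hTFB]; ring
      · rw [if_neg hTFB, if_neg hTFB]; ring
    · rw [Finset.mul_sum]
      apply Finset.sum_congr rfl
      intro B hB
      have hsub : B ⊆ H' := Finset.mem_powerset.mp hB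
      have hle : B.card ≤ H'.card := Finset.card_le_card hsub
      have hnB : s(u,v) ∉ B := fun hx => hnm (hsub hx)
      have hcB : (insert s(u,v) B).card = B.card + 1 := Finset.card_insert_of_notMem hnB
      rw [hcB]
      have he2 : H'.card + 1 - (B.card + 1) = H'.card - B.card := by omega
      rw [he2, pow_succ]
      by_cases hTFB : TF (insert s(u,v) B)
      · rw [if_pos hTFB, if_pos hTFB]; ring
      · rw [if_neg hTFB, if_neg hTFB]; ring
  set g := ∑ B ∈ H'.powerset,
      (if TF (insert s(u,v) B) then p ^ B.card * (1-p) ^ (H'.card - B.card) else 0) with hgdef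
  set bad := ∑ B ∈ H'.powerset,
      (if TF B ∧ ¬ TF (insert s(u,v) B) then p ^ B.card * (1-p) ^ (H'.card - B.card) else 0)
      with hbaddef
  have hg : f p H' - bad ≤ g := by
    rw [f, hbaddef, hgdef, ← Finset.sum_sub_distrib]
    apply Finset.sum_le_sum
    intro B hB
    have hX := wt_nonneg hp0 hp B.card (H'.card - B.card)
    by_cases h1 : TF B
    · by_cases h2 : TF (insert s(u,v) B)
      · simp only [if_pos h1, if_pos h2, if_neg (by tauto : ¬(TF B ∧ ¬TF (insert s(u,v) B)))]
        simp
      · simp only [if_pos h1, if_pos (by tauto : TF B ∧ ¬TF (insert s(u,v) B)), if_neg h2]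
        simp
    · have h2 : ¬ TF (insert s(u,v) B) := fun h => h1 (h.sub (Finset.subset_insert _ _))
      simp only [if_neg h1, if_neg h2, if_neg (by tauto : ¬(TF B ∧ ¬TF (insert s(u,v) B)))]
      simp
  have hbad : bad ≤ (n:ℝ) * (4 * p^2 * f p H') := by
    have step1 : bad ≤ ∑ B ∈ H'.powerset, ∑ w : Fin n,
        (if TF B ∧ s(u,w) ∈ B ∧ s(v,w) ∈ B then p ^ B.card * (1-p) ^ (H'.card - B.card) else 0) := by
      rw [hbaddef]
      apply Finset.sum_le_sum
      intro B hB
      by_cases hc : TF B ∧ ¬ TF (insert s(u,v) B)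
      · obtain ⟨w0, hw1, hw2⟩ := exists_path
          (fun x hx => hH'diag x (Finset.mem_powerset.mp hB hx)) huv hc.1 hc.2
        rw [if_pos hc]
        calc p ^ B.card * (1-p) ^ (H'.card - B.card)
            = (if TF B ∧ s(u,w0) ∈ B ∧ s(v,w0) ∈ B then
                p ^ B.card * (1-p) ^ (H'.card - B.card) else 0) := by
              rw [if_pos ⟨hc.1, hw1, hw2⟩]
          _ ≤ _ := Finset.single_le_sum
              (f := fun w => if TF B ∧ s(u,w) ∈ B ∧ s(v,w) ∈ B then
                p ^ B.card * (1-p) ^ (H'.card - B.card) else 0)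
              (fun w _ => term_nonneg hp0 hp _ _ _) (Finset.mem_univ w0)
      · rw [if_neg hc]
        exact Finset.sum_nonneg (fun w _ => term_nonneg hp0 hp _ _ _)
    have step2 : ∑ B ∈ H'.powerset, ∑ w : Fin n,
        (if TF B ∧ s(u,w) ∈ B ∧ s(v,w) ∈ B then p ^ B.card * (1-p) ^ (H'.card - B.card) else 0)
        = ∑ w : Fin n, ∑ B ∈ H'.powerset,
        (if TF B ∧ s(u,w) ∈ B ∧ s(v,w) ∈ B then p ^ B.card * (1-p) ^ (H'.card - B.card) else 0) :=
      Finset.sum_comm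
    have step3 : ∑ w : Fin n, ∑ B ∈ H'.powerset,
        (if TF B ∧ s(u,w) ∈ B ∧ s(v,w) ∈ B then p ^ B.card * (1-p) ^ (H'.card - B.card) else 0)
        ≤ ∑ _w : Fin n, 4 * p^2 * f p H' := by
      apply Finset.sum_le_sum
      intro w _
      apply pair_bound hp0 hp H'
      rw [Ne, Sym2.eq_iff]
      rintro (⟨h1, -⟩ | ⟨h1, h2⟩)
      · exact huv h1
      · exact huv (h1.trans h2)
    have step4 : ∑ _w : Fin n, 4 * p^2 * f p H' = (n:ℝ) * (4 * p^2 * f p H') := by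
      rw [Finset.sum_const, Finset.card_univ, Fintype.card_fin, nsmul_eq_mul]
    linarith [step1, step2 ▸ step1, step3]
  have hfH' := f_nonneg hp0 hp H'
  have hpg : p * (f p H' - bad) ≤ p * g := mul_le_mul_of_nonneg_left hg hp0
  have hpb : p * bad ≤ p * ((n:ℝ) * (4 * p^2 * f p H')) := mul_le_mul_of_nonneg_left hbad hp0
  rw [hdec]
  nlinarith [hpg, hpb]

lemma chain {p : ℝ} (hp0 : 0 ≤ p) (hp : p ≤ 1/2) (hc : 0 ≤ 1 - 4*(n:ℝ)*p^3)
    (S : Finset (Sym2 (Fin n))) :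
    ∀ H : Finset (Sym2 (Fin n)), (∀ x ∈ H, ¬x.IsDiag) → S ⊆ H →
      (1 - 4*(n:ℝ)*p^3)^S.card * f p (H \ S) ≤ f p H := by
  induction S using Finset.induction_on with
  | empty => intro H _ _; simp
  | @insert a S ha ih =>
    intro H hH hsub
    have haH : a ∈ H := hsub (Finset.mem_insert_self a S)
    have hS'sub : S ⊆ H.erase a := by
      intro x hx
      exact Finset.mem_erase.mpr ⟨fun hxa => ha (hxa ▸ hx), hsub (Finset.mem_insert_of_mem hx)⟩
    have hdiag' : ∀ x ∈ H.erase a, ¬x.IsDiag := fun x hx => hH x (Finset.erase_subset _ _ hx)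
    have hEq : H \ insert a S = (H.erase a) \ S := by
      ext x
      simp only [Finset.mem_sdiff, Finset.mem_erase, Finset.mem_insert]
      tauto
    rw [Finset.card_insert_of_notMem ha, hEq, pow_succ]
    calc (1 - 4*(n:ℝ)*p^3)^S.card * (1 - 4*(n:ℝ)*p^3) * f p ((H.erase a) \ S)
        = (1 - 4*(n:ℝ)*p^3) * ((1 - 4*(n:ℝ)*p^3)^S.card * f p ((H.erase a) \ S)) := by ring
      _ ≤ (1 - 4*(n:ℝ)*p^3) * f p (H.erase a) :=
          mul_le_mul_of_nonneg_left (ih (H.erase a) hdiag' hS'sub) hc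
      _ ≤ f p H := removal hp0 hp hH a haH

lemma restrict {p : ℝ} (K E : Finset (Sym2 (Fin n))) (hE : E ⊆ K) :
    ∑ A ∈ E.powerset, (if TF A then p ^ A.card * (1-p) ^ (K.card - A.card) else 0)
      = (1-p) ^ (K.card - E.card) * f p E := by
  rw [f, Finset.mul_sum]
  apply Finset.sum_congr rfl
  intro A hA
  have h1 : A.card ≤ E.card := Finset.card_le_card (Finset.mem_powerset.mp hA)
  have h2 : E.card ≤ K.card := Finset.card_le_card hE
  have h3 : K.card - A.card = (K.card - E.card) + (E.card - A.card) := by omega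
  rw [h3, pow_add]
  by_cases hTF : TF A
  · rw [if_pos hTF, if_pos hTF]; ring
  · rw [if_neg hTF, if_neg hTF]; ring

lemma sum_union_le_gen {α : Type*} [DecidableEq α] {f : α → ℝ} (hf : ∀ x, 0 ≤ f x)
    (A B : Finset α) : ∑ x ∈ A ∪ B, f x ≤ ∑ x ∈ A, f x + ∑ x ∈ B, f x := by
  have h := Finset.sum_union_inter (s₁ := A) (s₂ := B) (f := f)
  have h2 : 0 ≤ ∑ x ∈ A ∩ B, f x := Finset.sum_nonneg (fun x _ => hf x)
  linarith

lemma sum_biUnion_le' {ι α : Type*} [DecidableEq α] (s : Finset ι) (t : ι → Finset α)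
    (f : α → ℝ) (hf : ∀ x, 0 ≤ f x) :
    ∑ x ∈ s.biUnion t, f x ≤ ∑ i ∈ s, ∑ x ∈ t i, f x := by
  classical
  induction s using Finset.induction_on with
  | empty => simp
  | @insert a s ha ih =>
    rw [Finset.biUnion_insert, Finset.sum_insert ha]
    exact (sum_union_le_gen hf _ _).trans (by linarith)

end S1

/-- There exists δ > 0 such that for all sufficiently large n: if 𝒢 is a
finite collection of graphs on [n] such that every triangle-free graph on [n] is a
subgraph of some member of 𝒢, then Σ_{G∈𝒢} exp(−δ·(C(n,2) − e(G))/√n) ≥ 1/2. -/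
theorem stmt1 :
    ∃ δ : ℝ, 0 < δ ∧ ∃ N : ℕ, ∀ n : ℕ, N ≤ n →
      ∀ 𝓖 : Finset (SimpleGraph (Fin n)),
        (∀ T : SimpleGraph (Fin n), T.CliqueFree 3 → ∃ G ∈ 𝓖, T ≤ G) →
        (1 : ℝ) / 2 ≤
          ∑ G ∈ 𝓖, Real.exp (-δ * ((n.choose 2 - G.edgeSet.ncard : ℕ) : ℝ) / Real.sqrt n) := by
  classical
  refine ⟨1/8, by norm_num, 1, ?_⟩
  intro n hn 𝓖 hcov
  have hn1 : (1:ℝ) ≤ (n:ℝ) := by exact_mod_cast hn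
  set rn := Real.sqrt n with hrn
  have hrn1 : 1 ≤ rn := Real.one_le_sqrt.mpr hn1
  have hrn0 : (0:ℝ) < rn := by linarith
  set p : ℝ := 1/(4*rn) with hpdef
  have hp0 : 0 ≤ p := by positivity
  have hple : p ≤ 1/2 := by
    rw [hpdef, div_le_div_iff₀ (by positivity) (by norm_num)]
    linarith
  have hsq : rn^2 = (n:ℝ) := Real.sq_sqrt (by positivity)
  have hr3 : rn^3 = (n:ℝ) * rn := by
    rw [pow_succ, hsq]
  have hcube : 4*(n:ℝ)*p^3 = 1/(16*rn) := by
    rw [hpdef, div_pow, one_pow, mul_pow]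
    rw [mul_one_div, div_eq_div_iff (by positivity) (by positivity)]
    nlinarith [hr3, hrn0]
  have h116 : 1/(16*rn) ≤ 1/16 := by
    rw [div_le_div_iff₀ (by positivity) (by norm_num)]
    linarith
  have hc0 : (0:ℝ) ≤ 1 - 4*(n:ℝ)*p^3 := by rw [hcube]; linarith
  -- the set of non-diagonal pairs
  set K : Finset (Sym2 (Fin n)) := Finset.univ.filter (fun e => ¬ e.IsDiag) with hKdef
  have hKdiag : ∀ x ∈ K, ¬x.IsDiag := by
    intro x hx
    rw [hKdef, Finset.mem_filter] at hx
    exact hx.2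
  have hKcard : K.card = n.choose 2 := by
    calc K.card = Fintype.card {a : Sym2 (Fin n) // ¬ a.IsDiag} :=
          (Fintype.card_subtype _).symm
      _ = (Fintype.card (Fin n)).choose 2 := Sym2.card_subtype_not_diag
      _ = n.choose 2 := by rw [Fintype.card_fin]
  -- edge finsets
  have hEfin : ∀ G : SimpleGraph (Fin n), G.edgeSet.Finite := fun G => Set.toFinite _
  set EF : SimpleGraph (Fin n) → Finset (Sym2 (Fin n)) := fun G => (hEfin G).toFinset with hEF
  have hEFsub : ∀ G, EF G ⊆ K := by
    intro G x hx
    simp only [hEF] at hx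
    rw [(hEfin G).mem_toFinset] at hx
    rw [hKdef, Finset.mem_filter]
    exact ⟨Finset.mem_univ x, G.not_isDiag_of_mem_edgeSet hx⟩
  have hEFcard : ∀ G, (EF G).card = G.edgeSet.ncard :=
    fun G => (Set.ncard_eq_toFinset_card _ (hEfin G)).symm
  -- covering step
  have cover1 : S1.f p K ≤ ∑ G ∈ 𝓖, ∑ A ∈ (EF G).powerset,
      (if S1.TF A then p ^ A.card * (1-p) ^ (K.card - A.card) else 0) := by
    have hrw : S1.f p K = ∑ A ∈ K.powerset.filter S1.TF,
        p ^ A.card * (1-p) ^ (K.card - A.card) := by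
      rw [S1.f, ← Finset.sum_filter]
    rw [hrw]
    have hsub : K.powerset.filter S1.TF ⊆ 𝓖.biUnion (fun G => (EF G).powerset) := by
      intro A hA
      rw [Finset.mem_filter, Finset.mem_powerset] at hA
      obtain ⟨hAK, hTFA⟩ := hA
      have hcf : (SimpleGraph.fromEdgeSet (↑A : Set (Sym2 (Fin n)))).CliqueFree 3 := by
        intro t ht
        rw [SimpleGraph.is3Clique_iff] at ht
        obtain ⟨x, y, z, hxy, hxz, hyz, -⟩ := ht
        rw [SimpleGraph.fromEdgeSet_adj] at hxy hxz hyz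
        exact hTFA x y z (by exact_mod_cast hxy.1) (by exact_mod_cast hxz.1)
          (by exact_mod_cast hyz.1)
      obtain ⟨G, hG, hTG⟩ := hcov _ hcf
      rw [Finset.mem_biUnion]
      refine ⟨G, hG, Finset.mem_powerset.mpr ?_⟩
      intro x hx
      have hxd : ¬ x.IsDiag := hKdiag x (hAK hx)
      simp only [hEF]
      rw [(hEfin G).mem_toFinset]
      revert hx hxd
      induction x using Sym2.ind with
      | _ a b =>
      intro hx hxd
      rw [Sym2.mk_isDiag_iff] at hxd
      have hadj : (SimpleGraph.fromEdgeSet (↑A : Set (Sym2 (Fin n)))).Adj a b := by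
        rw [SimpleGraph.fromEdgeSet_adj]
        exact ⟨by exact_mod_cast hx, hxd⟩
      exact (SimpleGraph.mem_edgeSet G).mpr (hTG hadj)
    calc ∑ A ∈ K.powerset.filter S1.TF, p ^ A.card * (1-p) ^ (K.card - A.card)
        ≤ ∑ A ∈ 𝓖.biUnion (fun G => (EF G).powerset),
            (if S1.TF A then p ^ A.card * (1-p) ^ (K.card - A.card) else 0) := by
          rw [← Finset.sum_filter (s := 𝓖.biUnion (fun G => (EF G).powerset))]
          apply Finset.sum_le_sum_of_subset_of_nonneg
          · intro A hA
            rw [Finset.mem_filter]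
            rw [Finset.mem_filter] at hA
            exact ⟨hsub (Finset.mem_filter.mpr ⟨hA.1, hA.2⟩), hA.2⟩
          · intro A _ _
            exact S1.wt_nonneg hp0 hple _ _
      _ ≤ _ := S1.sum_biUnion_le' 𝓖 (fun G => (EF G).powerset) _
          (fun A => S1.term_nonneg hp0 hple _ _ _)
    
  -- key single-step numeric inequality
  set r := Real.exp (-(1/8)/rn) with hrdef
  have hr0 : (0:ℝ) ≤ r := le_of_lt (Real.exp_pos _)
  have hkey : 1 - p ≤ r * (1 - 4*(n:ℝ)*p^3) := by
    have hexp : 1 + (-(1/8)/rn) ≤ r := by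
      rw [hrdef]
      linarith [Real.add_one_le_exp (-(1/8)/rn)]
    rw [hcube, hpdef]
    have e1 : 1/(4*rn) = (1/rn)/4 := by
      rw [div_div]; ring_nf
    have e2 : 1/(16*rn) = (1/rn)/16 := by
      rw [div_div]; ring_nf
    have e3 : -(1/8)/rn = -((1/rn)/8) := by ring
    rw [e1, e2]
    rw [e3] at hexp
    set t := 1/rn with htdef
    have ht0 : 0 < t := by positivity
    have ht1 : t ≤ 1 := by
      rw [htdef, div_le_one hrn0]; linarith
    have h16 : (0:ℝ) ≤ 1 - t/16 := by linarith
    nlinarith [mul_le_mul_of_nonneg_right hexp h16, sq_nonneg t]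
  -- per-container bound
  have perG : ∀ G : SimpleGraph (Fin n),
      (1-p) ^ (K.card - (EF G).card) * S1.f p (EF G)
        ≤ r ^ (K.card - (EF G).card) * S1.f p K := by
    intro G
    have hchain := S1.chain hp0 hple hc0 (K \ EF G) K hKdiag Finset.sdiff_subset
    rw [Finset.sdiff_sdiff_eq_self (hEFsub G), Finset.card_sdiff_of_subset (hEFsub G)] at hchain
    calc (1-p) ^ (K.card - (EF G).card) * S1.f p (EF G)
        ≤ (r * (1 - 4*(n:ℝ)*p^3)) ^ (K.card - (EF G).card) * S1.f p (EF G) := by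
          apply mul_le_mul_of_nonneg_right _ (S1.f_nonneg hp0 hple _)
          exact pow_le_pow_left₀ (by linarith) hkey _
      _ = r ^ (K.card - (EF G).card) *
            ((1 - 4*(n:ℝ)*p^3) ^ (K.card - (EF G).card) * S1.f p (EF G)) := by
          rw [mul_pow]; ring
      _ ≤ r ^ (K.card - (EF G).card) * S1.f p K :=
          mul_le_mul_of_nonneg_left hchain (pow_nonneg hr0 _)
  have cover2 : S1.f p K ≤ (∑ G ∈ 𝓖, r ^ (K.card - (EF G).card)) * S1.f p K := by
    rw [Finset.sum_mul]
    refine cover1.trans ?_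
    apply Finset.sum_le_sum
    intro G _
    rw [S1.restrict K (EF G) (hEFsub G)]
    exact perG G
  have hfK := S1.f_pos hp0 hple K
  have hsum1 : 1 ≤ ∑ G ∈ 𝓖, r ^ (K.card - (EF G).card) := by
    by_contra hlt
    push_neg at hlt
    nlinarith [cover2, hfK]
  refine le_trans (by norm_num : (1:ℝ)/2 ≤ 1) (hsum1.trans (le_of_eq ?_))
  apply Finset.sum_congr rfl
  intro G _
  have hm : K.card - (EF G).card = n.choose 2 - G.edgeSet.ncard := by
    rw [hKcard, hEFcard]
  rw [hrdef, ← Real.exp_nat_mul, hm]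
  congr 1
  ring
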